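/- Let 3/4 < p < 1 and set x⁻ = (1 - √(4p-3))/(2p). Then the derivative of f_p at x⁻ equals (3 + √(4p-3))/(2p) - 1, and this value is strictly greater than 1; hence x⁻ is a hyperbolic repelling (unstable) fixed point of f_p. -/

import Mathlib

noncomputable def f (p x : ℝ) : ℝ := p * x / (1 - p * x + (p * x) ^ 2)

/-- for 3/4 < p < 1, f_p'(x⁻) = (3 + √(4p-3))/(2p) - 1 > 1,
hence x⁻ = (1 - √(4p-3))/(2p) is a repelling (unstable) fixed point. -/
theorem deriv_at_unstable_fixed_point (p : ℝ) (hp : 3/4 < p) (hp1 : p < 1) :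
    deriv (f p) ((1 - Real.sqrt (4*p - 3)) / (2*p))
        = (3 + Real.sqrt (4*p - 3)) / (2*p) - 1
    ∧ 1 < (3 + Real.sqrt (4*p - 3)) / (2*p) - 1
    ∧ 1 < |deriv (f p) ((1 - Real.sqrt (4*p - 3)) / (2*p))| := by
  have hp0 : (0:ℝ) < p := by linarith
  set s := Real.sqrt (4*p - 3) with hs
  have hs0 : 0 ≤ s := Real.sqrt_nonneg _
  have hs2 : s ^ 2 = 4*p - 3 := Real.sq_sqrt (by linarith)
  have hspos : 0 < s := Real.sqrt_pos.2 (by linarith)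
  have hslt1 : s < 1 := by
    nlinarith [hs2, hspos]
  set x : ℝ := (1 - s) / (2*p) with hx
  have hpx : p * x = (1 - s) / 2 := by
    field_simp [hx]
    rw [hx]; field_simp
  have hden : 1 - p * x + (p * x) ^ 2 = p := by
    rw [hpx]; nlinarith [hs2]
  have hdne : 1 - p * x + (p * x) ^ 2 ≠ 0 := by rw [hden]; positivity
  have hnum : HasDerivAt (fun y : ℝ => p * y) p x := by
    simpa using (hasDerivAt_id x).const_mul p
  have hd : HasDerivAt (fun y : ℝ => 1 - p * y + (p * y) ^ 2)
      (-p + 2 * (p * x) * p) x := by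
    have h1 : HasDerivAt (fun y : ℝ => 1 - p * y) (-p) x := by
      exact ((hasDerivAt_const x (1:ℝ)).sub hnum).congr_deriv (by ring)
    have h2 : HasDerivAt (fun y : ℝ => (p * y) ^ 2) (2 * (p * x) * p) x := by
      exact (hnum.pow 2).congr_deriv (by norm_num)
    exact h1.add h2
  have hder : HasDerivAt (f p)
      ((p * (1 - p * x + (p * x) ^ 2) - (p * x) * (-p + 2 * (p * x) * p)) /
        (1 - p * x + (p * x) ^ 2) ^ 2) x := by
    exact hnum.div hd hdne
  have hval : deriv (f p) x = (3 + s) / (2*p) - 1 := by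
    rw [hder.deriv, hden, hpx]
    field_simp
    linear_combination (-1) * hs2
  have h2 : 1 < (3 + s) / (2*p) - 1 := by
    rw [lt_sub_iff_add_lt, lt_div_iff₀ (by positivity)]
    nlinarith [hs2, hslt1, hspos]
  refine ⟨hval, h2, ?_⟩
  rw [hval]
  calc (1:ℝ) < (3 + s) / (2*p) - 1 := h2
    _ ≤ |(3 + s) / (2*p) - 1| := le_abs_self _
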